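/- In the noisy-pair model with class transition matrix T (size c×c), suppose c ≥ 8 and the class noise rate ρ_c := 1 − (1/c)·Σ_i T_{ii} satisfies ρ_c ≤ 1/2. Then the similarity noise rate is at most the class noise rate: P(H̄ ≠ H) ≤ ρ_c. -/

import Mathlib

/- The probability of an event `A` (on quadruples `(i₁, j₁, i₂, j₂)` of clean/noisy class
labels for two independent points) in the noisy-pair model with class transition matrix `T`
and uniform class priors: each quadruple has probability `(1/c²) · T i₁ j₁ · T i₂ j₂`. -/
open Classical in
noncomputable def noisyPairProb (c : ℕ) (T : Matrix (Fin c) (Fin c) ℝ)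
    (A : Fin c → Fin c → Fin c → Fin c → Prop) : ℝ :=
  ∑ i₁ : Fin c, ∑ j₁ : Fin c, ∑ i₂ : Fin c, ∑ j₂ : Fin c,
    if A i₁ j₁ i₂ j₂ then (1 / (c : ℝ) ^ 2) * T i₁ j₁ * T i₂ j₂ else 0

/-- If `c ≥ 8` and the class noise rate `ρ_c = 1 − (1/c)·Σ_i T_{ii}` is at most `1/2`,
then the similarity noise rate `P(H̄ ≠ H)` is at most the class noise rate. -/
theorem simiNoise_le_classNoise (c : ℕ) (hc : 8 ≤ c) (T : Matrix (Fin c) (Fin c) ℝ)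
    (hpos : ∀ i j, 0 ≤ T i j) (hrow : ∀ i, ∑ j, T i j = 1)
    (hrate : 1 - (1 / (c : ℝ)) * (∑ i, T i i) ≤ 1 / 2) :
    noisyPairProb c T (fun i₁ j₁ i₂ j₂ => ¬ ((i₁ = i₂) ↔ (j₁ = j₂))) ≤
      1 - (1 / (c : ℝ)) * ∑ i, T i i := by
  classical
  have hc0 : (0:ℝ) < c := by
    have : (8:ℝ) ≤ c := by exact_mod_cast hc
    linarith
  set a : ℝ := ∑ i, T i i with ha
  set Q : ℝ := ∑ i, ∑ j, (T i j)^2 with hQ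
  set C : ℝ := ∑ j, (∑ i, T i j)^2 with hCdef
  set k : ℝ := 1/(c:ℝ)^2 with hk
  -- the key identity
  have hP : noisyPairProb c T (fun i₁ j₁ i₂ j₂ => ¬ ((i₁ = i₂) ↔ (j₁ = j₂)))
      = k * ((c:ℝ) + C - 2*Q) := by
    unfold noisyPairProb
    have step : ∀ i₁ j₁ : Fin c,
        (∑ i₂ : Fin c, ∑ j₂ : Fin c,
          @ite ℝ (¬ ((i₁ = i₂) ↔ (j₁ = j₂))) (Classical.propDecidable _)
            ((1/(c:ℝ)^2) * T i₁ j₁ * T i₂ j₂) 0)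
        = k * T i₁ j₁ + k * (T i₁ j₁ * (∑ i₂, T i₂ j₁)) - 2 * (k * (T i₁ j₁)^2) := by
      intro i₁ j₁
      have e : ∀ i₂ j₂ : Fin c,
          (@ite ℝ (¬ ((i₁ = i₂) ↔ (j₁ = j₂))) (Classical.propDecidable _)
            ((1/(c:ℝ)^2) * T i₁ j₁ * T i₂ j₂) 0)
          = (if i₁ = i₂ then k * T i₁ j₁ * T i₂ j₂ else 0)
            + (if j₁ = j₂ then k * T i₁ j₁ * T i₂ j₂ else 0)
            - (if i₁ = i₂ ∧ j₁ = j₂ then 2 * (k * T i₁ j₁ * T i₂ j₂) else 0) := by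
        intro i₂ j₂
        by_cases hp : i₁ = i₂ <;> by_cases hq : j₁ = j₂ <;> simp [hp, hq, hk] <;> ring
      simp only [e, Finset.sum_sub_distrib, Finset.sum_add_distrib]
      have hA : (∑ i₂ : Fin c, ∑ j₂ : Fin c, if i₁ = i₂ then k * T i₁ j₁ * T i₂ j₂ else 0)
          = k * T i₁ j₁ := by
        have : ∀ i₂ : Fin c, (∑ j₂ : Fin c, if i₁ = i₂ then k * T i₁ j₁ * T i₂ j₂ else 0)
            = if i₁ = i₂ then ∑ j₂ : Fin c, k * T i₁ j₁ * T i₂ j₂ else 0 := by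
          intro i₂; by_cases h : i₁ = i₂ <;> simp [h]
        simp only [this, Finset.sum_ite_eq, Finset.mem_univ, if_true]
        rw [show ∀ g : Fin c → ℝ, (∑ j₂, k * T i₁ j₁ * g j₂) = k * T i₁ j₁ * ∑ j₂, g j₂
          from fun g => (Finset.mul_sum _ _ _).symm, hrow, mul_one]
      have hB : (∑ i₂ : Fin c, ∑ j₂ : Fin c, if j₁ = j₂ then k * T i₁ j₁ * T i₂ j₂ else 0)
          = k * (T i₁ j₁ * (∑ i₂, T i₂ j₁)) := by
        simp only [Finset.sum_ite_eq, Finset.mem_univ, if_true]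
        rw [← Finset.mul_sum]; ring
      have hC : (∑ i₂ : Fin c, ∑ j₂ : Fin c,
            if i₁ = i₂ ∧ j₁ = j₂ then 2 * (k * T i₁ j₁ * T i₂ j₂) else 0)
          = 2 * (k * (T i₁ j₁)^2) := by
        have h1 : ∀ i₂ j₂ : Fin c, (if i₁ = i₂ ∧ j₁ = j₂ then 2 * (k * T i₁ j₁ * T i₂ j₂) else 0)
            = if i₁ = i₂ then (if j₁ = j₂ then 2 * (k * T i₁ j₁ * T i₂ j₂) else 0) else 0 := by
          intro i₂ j₂; by_cases hp : i₁ = i₂ <;> by_cases hq : j₁ = j₂ <;> simp [hp, hq]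
        simp only [h1]
        have h2 : ∀ i₂ : Fin c,
            (∑ j₂ : Fin c, if i₁ = i₂ then (if j₁ = j₂ then 2 * (k * T i₁ j₁ * T i₂ j₂) else 0) else 0)
            = if i₁ = i₂ then 2 * (k * T i₁ j₁ * T i₂ j₁) else 0 := by
          intro i₂; by_cases h : i₁ = i₂ <;> simp [h]
        simp only [h2, Finset.sum_ite_eq, Finset.mem_univ, if_true]
        ring
      rw [hA, hB, hC]
    simp only [step]
    have h1 : (∑ i₁ : Fin c, ∑ j₁ : Fin c, T i₁ j₁) = (c:ℝ) := by
      simp [hrow]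
    have h2 : (∑ i₁ : Fin c, ∑ j₁ : Fin c, T i₁ j₁ * (∑ i₂ : Fin c, T i₂ j₁)) = C := by
      rw [Finset.sum_comm, hCdef]
      refine Finset.sum_congr rfl fun j _ => ?_
      rw [← Finset.sum_mul, sq]
    have h3 : (∑ i₁ : Fin c, ∑ j₁ : Fin c,
        (k * T i₁ j₁ + k * (T i₁ j₁ * ∑ i₂, T i₂ j₁) - 2 * (k * (T i₁ j₁)^2)))
      = k * (∑ i₁ : Fin c, ∑ j₁ : Fin c, T i₁ j₁)
        + k * (∑ i₁ : Fin c, ∑ j₁ : Fin c, T i₁ j₁ * (∑ i₂ : Fin c, T i₂ j₁))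
        - 2 * (k * (∑ i₁ : Fin c, ∑ j₁ : Fin c, (T i₁ j₁)^2)) := by
      simp only [Finset.sum_add_distrib, Finset.sum_sub_distrib, Finset.mul_sum]
    rw [h3, h1, h2, ← hQ]
    ring
  -- now the numeric bounds
  set D : ℝ := ∑ i, (T i i)^2 with hD
  have hT1 : ∀ i j, T i j ≤ 1 := by
    intro i j
    have := hrow i
    calc T i j ≤ ∑ j', T i j' := Finset.single_le_sum (fun j' _ => hpos i j') (Finset.mem_univ j)
    _ = 1 := hrow i
  have hac : a ≤ (c:ℝ) := by
    rw [ha]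
    calc (∑ i, T i i) ≤ ∑ _i : Fin c, (1:ℝ) := Finset.sum_le_sum (fun i _ => hT1 i i)
    _ = c := by simp
  have hA2 : (c:ℝ)/2 ≤ a := by
    have h' : 1/2 ≤ (1/(c:ℝ)) * a := by linarith
    have h2 : (c:ℝ) * ((1/(c:ℝ)) * a) = a := by field_simp
    have h3 := mul_le_mul_of_nonneg_left h' hc0.le
    linarith
  have hQD : D ≤ Q := by
    rw [hD, hQ]
    refine Finset.sum_le_sum fun i _ => ?_
    exact Finset.single_le_sum (f := fun j => (T i j)^2) (fun j _ => sq_nonneg _)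
      (Finset.mem_univ i)
  have hDa : a^2 ≤ (c:ℝ) * D := by
    have := sq_sum_le_card_mul_sum_sq (s := (Finset.univ : Finset (Fin c)))
      (f := fun i => T i i)
    simpa [ha, hD] using this
  -- column decomposition
  have hcol : ∀ j, ∑ i, T i j = T j j + ∑ i, (if i = j then 0 else T i j) := by
    intro j
    have h0 : ∀ i : Fin c, T i j = (if i = j then T j j else 0) + (if i = j then 0 else T i j) := by
      intro i; by_cases h : i = j <;> simp [h]
    rw [Finset.sum_congr rfl fun i _ => h0 i, Finset.sum_add_distrib]
    simp
  set r := fun j : Fin c => ∑ i : Fin c, (if i = j then 0 else T i j) with hr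
  have hrpos : ∀ j, 0 ≤ r j := by
    intro j
    refine Finset.sum_nonneg fun i _ => ?_
    by_cases h : i = j <;> simp [h, hpos]
  have hrsum : (∑ j, r j) = (c:ℝ) - a := by
    have htot : (∑ j : Fin c, ∑ i : Fin c, T i j) = (c:ℝ) := by
      rw [Finset.sum_comm]; simp [hrow]
    have : (∑ j : Fin c, (T j j + r j)) = (c:ℝ) := by
      rw [← htot]; exact (Finset.sum_congr rfl fun j _ => (hcol j).symm)
    rw [Finset.sum_add_distrib] at this
    rw [ha]; linarith
  have hrsq : (∑ j, (r j)^2) ≤ ((c:ℝ) - a)^2 := by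
    rw [← hrsum]
    calc (∑ j, (r j)^2) ≤ ∑ j, (r j) * (∑ j', r j') := by
          refine Finset.sum_le_sum fun j _ => ?_
          rw [sq]
          exact mul_le_mul_of_nonneg_left
            (Finset.single_le_sum (fun j' _ => hrpos j') (Finset.mem_univ j)) (hrpos j)
    _ = (∑ j, r j)^2 := by rw [← Finset.sum_mul, sq]
  have hCa : C ≤ D + 2 * ((c:ℝ) - a) + ((c:ℝ) - a)^2 := by
    have hCle : C ≤ ∑ j, ((T j j)^2 + 2 * r j + (r j)^2) := by
      rw [hCdef]
      refine Finset.sum_le_sum fun j _ => ?_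
      rw [hcol j]
      have := hT1 j j
      have := hpos j j
      have := hrpos j
      nlinarith [hrpos j, hT1 j j, hpos j j]
    have : (∑ j, ((T j j)^2 + 2 * r j + (r j)^2))
        = D + 2 * ((c:ℝ) - a) + (∑ j, (r j)^2) := by
      rw [Finset.sum_add_distrib, Finset.sum_add_distrib, ← Finset.mul_sum, hrsum, hD]
    linarith [hCle, hrsq, this.le, this.ge]
  -- final arithmetic
  rw [hP]
  have hnum : (c:ℝ) + C - 2*Q ≤ (c:ℝ)^2 - (c:ℝ)*a := by
    have hfac : 0 ≤ ((c:ℝ) - a) * ((c:ℝ)^2 - 4*(c:ℝ) - ((c:ℝ) - a)*((c:ℝ) - 1)) := by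
      have h8 : (8:ℝ) ≤ c := by exact_mod_cast hc
      have hb : 0 ≤ (c:ℝ) - a := by linarith
      have hb2 : (c:ℝ) - a ≤ (c:ℝ)/2 := by linarith
      have : 0 ≤ (c:ℝ)^2 - 4*(c:ℝ) - ((c:ℝ) - a)*((c:ℝ) - 1) := by nlinarith
      exact mul_nonneg hb this
    nlinarith [hCa, hQD, hDa, hc0, hfac, mul_pos hc0 hc0]
  have hgoal : k * ((c:ℝ) + C - 2*Q) ≤ k * ((c:ℝ)^2 - (c:ℝ)*a) := by
    apply mul_le_mul_of_nonneg_left hnum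
    rw [hk]; positivity
  have hRHS : k * ((c:ℝ)^2 - (c:ℝ)*a) = 1 - (1/(c:ℝ))*a := by
    rw [hk]; field_simp

  linarith [hgoal, hRHS.le, hRHS.ge]
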